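/- Let H be a bounded operator on ℓ²(Γ) for a uniformly discrete set Γ ⊆ ℝ^n, with matrix elements satisfying the short-range condition |H_{xy}| ≤ C·d(x,y)^{-(n+ε)} for some C, ε > 0. For m > 0, let G^m be the trimmed operator defined by G^m_{xy} = H_{xy} if d(x,y) ≤ m and G^m_{xy} = 0 otherwise. Then ‖H − G^m‖ → 0 as m → ∞; more precisely, there is a constant C₂ depending only on n, ε, and the separation of Γ, such that ‖H − G^m‖ ≤ C·C₂·m^{-ε}. -/

import Mathlib

open Classical

open scoped ENNReal NNReal

lemma aux_coe_nnnorm_tsum_le {ι : Type*} (c : ι → ℂ) :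
    (‖∑' x, c x‖₊ : ℝ≥0∞) ≤ ∑' x, (‖c x‖₊ : ℝ≥0∞) := by
  by_cases h : Summable fun x => ‖c x‖₊
  · rw [← ENNReal.coe_tsum h]
    exact ENNReal.coe_le_coe.2 (nnnorm_tsum_le h)
  · have h2 : ∑' x, (‖c x‖₊ : ℝ≥0∞) = ⊤ := by
      by_contra h'
      exact h (ENNReal.tsum_coe_ne_top_iff_summable.1 h')
    simp [h2]

lemma aux_amgm (u v : ℝ≥0) : 2 * ((u : ℝ≥0∞) * v) ≤ (u : ℝ≥0∞) ^ 2 + (v : ℝ≥0∞) ^ 2 := by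
  have : ((2 : ℝ≥0) : ℝ≥0∞) = 2 := by norm_num
  rw [← ENNReal.coe_mul, ← ENNReal.coe_pow, ← ENNReal.coe_pow, ← ENNReal.coe_add, ← this,
    ← ENNReal.coe_mul, ENNReal.coe_le_coe, ← NNReal.coe_le_coe]
  push_cast
  nlinarith [sq_nonneg ((u : ℝ) - v)]

lemma aux_packing (n : ℕ) {l : ℝ} (hl : 0 < l) (F : Finset (Fin n → ℝ))
    (hsep : ∀ y ∈ F, ∀ z ∈ F, y ≠ z → l < dist y z)
    (x : Fin n → ℝ) {R : ℝ} (hR : 0 ≤ R) (hF : ∀ y ∈ F, dist x y ≤ R) :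
    (F.card : ℝ) * l ^ n ≤ (2 * R + l) ^ n := by
  have h2 : 0 < l / 2 := by linarith
  have hdisj : (F : Set (Fin n → ℝ)).PairwiseDisjoint (fun y => Metric.ball y (l / 2)) := by
    intro y hy z hz hyz
    exact Metric.ball_disjoint_ball (by
      have := hsep y (Finset.mem_coe.1 hy) z (Finset.mem_coe.1 hz) hyz
      linarith)
  have hsum := MeasureTheory.measure_biUnion_finset (μ := MeasureTheory.volume) hdisj
    (fun y _ => (Metric.isOpen_ball).measurableSet)
  have hsub : (⋃ y ∈ F, Metric.ball y (l / 2)) ⊆ Metric.closedBall x (R + l / 2) := by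
    intro z hz
    simp only [Set.mem_iUnion] at hz
    obtain ⟨y, hy, hzy⟩ := hz
    rw [Metric.mem_closedBall]
    have h1 : dist z y < l / 2 := Metric.mem_ball.1 hzy
    have h3 : dist x y ≤ R := hF y hy
    calc dist z x ≤ dist z y + dist y x := dist_triangle _ _ _
      _ ≤ l / 2 + R := by rw [dist_comm y x]; linarith
      _ = R + l / 2 := by ring
  have hvol : ∀ y : Fin n → ℝ,
      MeasureTheory.volume (Metric.ball y (l / 2)) = ENNReal.ofReal (l ^ n) := by
    intro y
    rw [Real.volume_pi_ball y h2]
    norm_num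
    rw [mul_div_cancel₀]
    norm_num
  have key : (F.card : ℝ≥0∞) * ENNReal.ofReal (l ^ n) ≤ ENNReal.ofReal ((2 * R + l) ^ n) := by
    calc (F.card : ℝ≥0∞) * ENNReal.ofReal (l ^ n)
        = ∑ y ∈ F, MeasureTheory.volume (Metric.ball (y : Fin n → ℝ) (l / 2)) := by
          rw [Finset.sum_congr rfl (fun y _ => hvol y), Finset.sum_const, nsmul_eq_mul]
      _ = MeasureTheory.volume (⋃ y ∈ F, Metric.ball (y : Fin n → ℝ) (l / 2)) := hsum.symm
      _ ≤ MeasureTheory.volume (Metric.closedBall x (R + l / 2)) :=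
          MeasureTheory.measure_mono hsub
      _ = ENNReal.ofReal ((2 * (R + l / 2)) ^ n) := by
          rw [Real.volume_pi_closedBall x (by positivity)]
          norm_num
      _ = ENNReal.ofReal ((2 * R + l) ^ n) := by ring_nf
  rw [← ENNReal.ofReal_natCast, ← ENNReal.ofReal_mul (by positivity)] at key
  exact (ENNReal.ofReal_le_ofReal_iff (by positivity)).1 key

lemma aux_card (n : ℕ) {l : ℝ} (hl : 0 < l) (Γ : Set (Fin n → ℝ))
    (hsep : ∀ x ∈ Γ, ∀ y ∈ Γ, x ≠ y → l < dist x y) (x : Fin n → ℝ) {R : ℝ} (hR : 0 ≤ R)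
    (s : Finset Γ) (hs : ∀ y ∈ s, dist x (y : Fin n → ℝ) ≤ R) :
    (s.card : ℝ) * l ^ n ≤ (2 * R + l) ^ n := by
  have key := aux_packing n hl (s.image (Subtype.val : Γ → (Fin n → ℝ))) ?_ x hR ?_
  · rwa [Finset.card_image_of_injective _ Subtype.coe_injective] at key
  · intro y hy z hz hyz
    simp only [Finset.mem_image] at hy hz
    obtain ⟨y', _, rfl⟩ := hy
    obtain ⟨z', _, rfl⟩ := hz
    exact hsep _ y'.2 _ z'.2 hyz
  · intro y hy
    simp only [Finset.mem_image] at hy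
    obtain ⟨y', hy', rfl⟩ := hy
    exact hs y' hy'

lemma aux_fin (n : ℕ) {l : ℝ} (hl : 0 < l) (Γ : Set (Fin n → ℝ))
    (hsep : ∀ x ∈ Γ, ∀ y ∈ Γ, x ≠ y → l < dist x y) (x : Fin n → ℝ) {R : ℝ} (hR : 0 ≤ R) :
    {y : Γ | dist x (y : Fin n → ℝ) ≤ R}.Finite := by
  by_contra h
  have hinf : {y : Γ | dist x (y : Fin n → ℝ) ≤ R}.Infinite := h
  obtain ⟨F, hFsub, hFcard⟩ :=
    hinf.exists_subset_card_eq (⌈(2 * R + l) ^ n / l ^ n⌉₊ + 1)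
  have hb := aux_card n hl Γ hsep x hR F (fun y hy => hFsub hy)
  have hln : (0 : ℝ) < l ^ n := pow_pos hl n
  have h1 : (F.card : ℝ) ≤ (2 * R + l) ^ n / l ^ n := by
    rw [le_div_iff₀ hln]; exact hb
  have h2 := Nat.le_ceil ((2 * R + l) ^ n / l ^ n)
  rw [hFcard] at h1
  push_cast at h1
  linarith

lemma aux_rowsum (n : ℕ) {l ε C m : ℝ} (hl : 0 < l) (hε : 0 < ε) (hC : 0 ≤ C) (hm : 0 < m)
    (Γ : Set (Fin n → ℝ)) (hsep : ∀ x ∈ Γ, ∀ y ∈ Γ, x ≠ y → l < dist x y) (x : Γ) :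
    (∑' y : Γ, (if dist (x : Fin n → ℝ) (y : Fin n → ℝ) ≤ m then 0 else
      ENNReal.ofReal (C * dist (x : Fin n → ℝ) (y : Fin n → ℝ) ^ (-((n : ℝ) + ε)))))
      ≤ ENNReal.ofReal (C * ((6 / l) ^ n * (1 - 2 ^ (-ε))⁻¹) * m ^ (-ε)) := by
  set t : ℝ := max m l with htdef
  have htm : m ≤ t := le_max_left _ _
  have htl : l ≤ t := le_max_right _ _
  have ht : 0 < t := lt_of_lt_of_le hm htm
  set d : Γ → ℝ := fun y => dist (x : Fin n → ℝ) (y : Fin n → ℝ) with hd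
  set U : ℕ → Γ → ℝ≥0∞ := fun k y =>
    if 2 ^ k * t < d y ∧ d y ≤ 2 ^ (k + 1) * t
      then ENNReal.ofReal (C * (2 ^ k * t) ^ (-((n : ℝ) + ε))) else 0 with hU
  have hexp : -((n : ℝ) + ε) ≤ 0 := neg_nonpos.2 (by positivity)
  have hr0 : (0 : ℝ) ≤ 2 ^ (-ε) := Real.rpow_nonneg (by norm_num) _
  have hr1 : (2 : ℝ) ^ (-ε) < 1 :=
    Real.rpow_lt_one_of_one_lt_of_neg one_lt_two (neg_neg_iff_pos.2 hε)
  -- pointwise domination by shells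
  have hpt : ∀ y : Γ, (if d y ≤ m then 0 else
      ENNReal.ofReal (C * d y ^ (-((n : ℝ) + ε)))) ≤ ∑' k, U k y := by
    intro y
    split_ifs with hdy
    · exact zero_le
    push_neg at hdy
    have hxy : x ≠ y := by
      rintro rfl
      simp only [d, dist_self] at hdy
      linarith
    have hly : l < d y :=
      hsep _ x.2 _ y.2 (fun h => hxy (Subtype.ext h))
    have hty : t < d y := max_lt hdy hly
    have hex : ∃ k : ℕ, d y ≤ 2 ^ (k + 1) * t := by
      obtain ⟨k, hk⟩ := pow_unbounded_of_one_lt (d y / t) (one_lt_two (α := ℝ))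
      refine ⟨k, ?_⟩
      have h1 : d y < 2 ^ k * t := by
        rw [div_lt_iff₀ ht] at hk; linarith
      have h2 : (2 : ℝ) ^ k ≤ 2 ^ (k + 1) :=
        pow_le_pow_right₀ one_le_two (Nat.le_succ k)
      nlinarith
    set k := Nat.find hex with hkdef
    have hk2 : d y ≤ 2 ^ (k + 1) * t := Nat.find_spec hex
    have hk1 : 2 ^ k * t < d y := by
      rcases Nat.eq_zero_or_pos k with h0 | h0
      · rw [h0]; simpa using hty
      · have hlt : k - 1 < k := Nat.sub_lt h0 one_pos
        have hmin := Nat.find_min hex hlt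
        push_neg at hmin
        have hkk : k - 1 + 1 = k := Nat.succ_pred_eq_of_pos h0
        rwa [hkk] at hmin
    refine le_trans ?_ (ENNReal.le_tsum k)
    have hUk : U k y = ENNReal.ofReal (C * (2 ^ k * t) ^ (-((n : ℝ) + ε))) :=
      if_pos ⟨hk1, hk2⟩
    rw [hUk]
    apply ENNReal.ofReal_le_ofReal
    refine mul_le_mul_of_nonneg_left ?_ hC
    exact Real.rpow_le_rpow_of_nonpos (mul_pos (pow_pos two_pos k) ht) hk1.le hexp
  -- per-shell bound
  have hshell : ∀ k : ℕ, (∑' y : Γ, U k y) ≤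
      ENNReal.ofReal ((C * (6 / l) ^ n * t ^ (-ε)) * ((2 : ℝ) ^ (-ε)) ^ k) := by
    intro k
    have hRpos : (0 : ℝ) ≤ 2 ^ (k + 1) * t := by positivity
    have hfin : {y : Γ | dist (x : Fin n → ℝ) (y : Fin n → ℝ) ≤ 2 ^ (k + 1) * t}.Finite :=
      aux_fin n hl Γ hsep _ hRpos
    have hts : (∑' y : Γ, U k y) = ∑ y ∈ hfin.toFinset, U k y := by
      refine tsum_eq_sum (fun y hy => ?_)
      rw [Set.Finite.mem_toFinset] at hy
      simp only [Set.mem_setOf_eq] at hy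
      exact if_neg (fun hc => hy hc.2)
    rw [hts]
    have hcardR := aux_card n hl Γ hsep _ hRpos hfin.toFinset
      (fun y hy => by simpa using (Set.Finite.mem_toFinset hfin).1 hy)
    -- card bound in ℝ≥0∞
    have hpos2k : (0 : ℝ) < 2 ^ k * t := mul_pos (pow_pos two_pos k) ht
    have hB : (2 * (2 ^ (k + 1) * t) + l) ^ n ≤ (6 * 2 ^ k * t) ^ n := by
      apply pow_le_pow_left₀ (by positivity)
      have h2e : (2 : ℝ) ^ (k + 1) = 2 * 2 ^ k := by ring
      have h2k : (1 : ℝ) ≤ 2 ^ k := by simpa using pow_le_pow_right₀ (one_le_two (α := ℝ)) (Nat.zero_le k)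
      nlinarith [ht, htl]
    have hcard : (hfin.toFinset.card : ℝ) ≤ (6 * 2 ^ k * t / l) ^ n := by
      rw [div_pow, le_div_iff₀ (pow_pos hl n)]
      exact hcardR.trans hB
    have hcard' : (hfin.toFinset.card : ℝ≥0∞) ≤ ENNReal.ofReal ((6 * 2 ^ k * t / l) ^ n) := by
      rw [← ENNReal.ofReal_natCast]
      exact ENNReal.ofReal_le_ofReal hcard
    calc (∑ y ∈ hfin.toFinset, U k y)
        ≤ hfin.toFinset.card • ENNReal.ofReal (C * (2 ^ k * t) ^ (-((n : ℝ) + ε))) := by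
          refine Finset.sum_le_card_nsmul _ _ _ (fun y _ => ?_)
          rw [hU]
          dsimp only
          split_ifs
          · exact le_rfl
          · exact zero_le
      _ = (hfin.toFinset.card : ℝ≥0∞) * ENNReal.ofReal (C * (2 ^ k * t) ^ (-((n : ℝ) + ε))) := by
          rw [nsmul_eq_mul]
      _ ≤ ENNReal.ofReal ((6 * 2 ^ k * t / l) ^ n) *
            ENNReal.ofReal (C * (2 ^ k * t) ^ (-((n : ℝ) + ε))) := by
          exact mul_le_mul_left hcard' _
      _ = ENNReal.ofReal ((6 * 2 ^ k * t / l) ^ n * (C * (2 ^ k * t) ^ (-((n : ℝ) + ε)))) := by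
          rw [← ENNReal.ofReal_mul (by positivity)]
      _ = ENNReal.ofReal ((C * (6 / l) ^ n * t ^ (-ε)) * ((2 : ℝ) ^ (-ε)) ^ k) := by
          congr 1
          have e1 : (6 * 2 ^ k * t / l) ^ n = (6 / l) ^ n * (2 ^ k * t) ^ n := by
            rw [← mul_pow]; congr 1; field_simp
          rw [e1]
          have e2 : ((2 : ℝ) ^ k * t) ^ (n : ℕ) * (2 ^ k * t) ^ (-((n : ℝ) + ε))
              = (2 ^ k * t) ^ (-ε) := by
            rw [← Real.rpow_natCast ((2 : ℝ) ^ k * t) n, ← Real.rpow_add hpos2k]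
            congr 1; ring
          have e3 : ((2 : ℝ) ^ k * t) ^ (-ε) = ((2 : ℝ) ^ (-ε)) ^ k * t ^ (-ε) := by
            rw [Real.mul_rpow (by positivity) ht.le]
            congr 1
            rw [← Real.rpow_natCast (2 : ℝ) k, ← Real.rpow_natCast ((2 : ℝ) ^ (-ε)) k,
              ← Real.rpow_mul (by norm_num), ← Real.rpow_mul (by norm_num)]
            congr 1; ring
          calc (6 / l) ^ n * (2 ^ k * t) ^ n * (C * (2 ^ k * t) ^ (-((n : ℝ) + ε)))
              = (6 / l) ^ n * C * (((2 : ℝ) ^ k * t) ^ (n : ℕ) * (2 ^ k * t) ^ (-((n : ℝ) + ε))) := by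
                ring
            _ = (6 / l) ^ n * C * (((2 : ℝ) ^ (-ε)) ^ k * t ^ (-ε)) := by rw [e2, e3]
            _ = C * (6 / l) ^ n * t ^ (-ε) * ((2 : ℝ) ^ (-ε)) ^ k := by ring
  have hsummable : Summable (fun k : ℕ => (C * (6 / l) ^ n * t ^ (-ε)) * ((2 : ℝ) ^ (-ε)) ^ k) :=
    (summable_geometric_of_lt_one hr0 hr1).mul_left _
  calc (∑' y : Γ, (if d y ≤ m then 0 else ENNReal.ofReal (C * d y ^ (-((n : ℝ) + ε)))))
      ≤ ∑' y : Γ, ∑' k : ℕ, U k y := ENNReal.tsum_le_tsum hpt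
    _ = ∑' k : ℕ, ∑' y : Γ, U k y := ENNReal.tsum_comm
    _ ≤ ∑' k : ℕ, ENNReal.ofReal ((C * (6 / l) ^ n * t ^ (-ε)) * ((2 : ℝ) ^ (-ε)) ^ k) :=
        ENNReal.tsum_le_tsum hshell
    _ = ENNReal.ofReal (∑' k : ℕ, (C * (6 / l) ^ n * t ^ (-ε)) * ((2 : ℝ) ^ (-ε)) ^ k) :=
        (ENNReal.ofReal_tsum_of_nonneg (fun k => by positivity) hsummable).symm
    _ = ENNReal.ofReal ((C * (6 / l) ^ n * t ^ (-ε)) * (1 - 2 ^ (-ε))⁻¹) := by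
        rw [tsum_mul_left, tsum_geometric_of_lt_one hr0 hr1]
    _ ≤ ENNReal.ofReal (C * ((6 / l) ^ n * (1 - 2 ^ (-ε))⁻¹) * m ^ (-ε)) := by
        apply ENNReal.ofReal_le_ofReal
        have h1 : t ^ (-ε) ≤ m ^ (-ε) :=
          Real.rpow_le_rpow_of_nonpos hm htm (neg_nonpos.2 hε.le)
        have h2 : (0 : ℝ) ≤ (1 - 2 ^ (-ε))⁻¹ := inv_nonneg.2 (by linarith)
        have e : C * (6 / l) ^ n * t ^ (-ε) * (1 - 2 ^ (-ε))⁻¹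
            = (C * ((6 / l) ^ n * (1 - 2 ^ (-ε))⁻¹)) * t ^ (-ε) := by ring
        rw [e]
        exact mul_le_mul_of_nonneg_left h1 (by positivity)

set_option maxHeartbeats 1000000

/-- **Trimming a short-range operator.** Let `Γ ⊆ ℝⁿ` be uniformly discrete with
separation `l` (maximum distance). There is a constant `C₂ = C₂(n, ε, l)` such
that: if `H` is a bounded operator on `ℓ²(Γ)` whose matrix elements satisfy the
short-range bound `|H_{xy}| ≤ C·d(x,y)^{-(n+ε)}` (for `x ≠ y`), and `G` is a
trimmed operator whose matrix elements agree with those of `H` for `d(x,y) ≤ m`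
and vanish otherwise, then `‖H − G‖ ≤ C·C₂·m^{-ε}`. -/
theorem trimming_norm_bound (n : ℕ) (l ε : ℝ) (hl : 0 < l) (hε : 0 < ε) :
    ∃ C₂ : ℝ, ∀ (Γ : Set (Fin n → ℝ)),
      (∀ x ∈ Γ, ∀ y ∈ Γ, x ≠ y → l < dist x y) →
      ∀ (H G : lp (fun _ : Γ => ℂ) 2 →L[ℂ] lp (fun _ : Γ => ℂ) 2)
        (C m : ℝ), 0 ≤ C → 0 < m →
        (∀ x y : Γ, x ≠ y →
          ‖(inner ℂ (lp.single 2 x (1 : ℂ)) (H (lp.single 2 y (1 : ℂ))) : ℂ)‖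
            ≤ C * (dist (x : Fin n → ℝ) (y : Fin n → ℝ)) ^ (-((n : ℝ) + ε))) →
        (∀ x y : Γ,
          (inner ℂ (lp.single 2 x (1 : ℂ)) (G (lp.single 2 y (1 : ℂ))) : ℂ)
            = if dist (x : Fin n → ℝ) (y : Fin n → ℝ) ≤ m
              then (inner ℂ (lp.single 2 x (1 : ℂ)) (H (lp.single 2 y (1 : ℂ))) : ℂ)
              else 0) →
        ‖H - G‖ ≤ C * C₂ * m ^ (-ε) := by
  have hr0 : (0 : ℝ) ≤ 2 ^ (-ε) := Real.rpow_nonneg (by norm_num) _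
  have hr1 : (2 : ℝ) ^ (-ε) < 1 :=
    Real.rpow_lt_one_of_one_lt_of_neg one_lt_two (by linarith)
  refine ⟨(6 / l) ^ n * (1 - 2 ^ (-ε))⁻¹, ?_⟩
  intro Γ hsep H G C m hC hm hH hG
  set C₂ : ℝ := (6 / l) ^ n * (1 - 2 ^ (-ε))⁻¹ with hC₂
  set S : ℝ := C * C₂ * m ^ (-ε) with hSdef
  set A := H - G with hA
  have hC₂0 : 0 ≤ C₂ := by
    rw [hC₂]
    exact mul_nonneg (by positivity) (inv_nonneg.2 (by linarith))
  have hS0 : 0 ≤ S := by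
    rw [hSdef]
    exact mul_nonneg (mul_nonneg hC hC₂0) (Real.rpow_nonneg hm.le _)
  -- matrix elements of A
  set a : Γ → Γ → ℂ :=
    fun x y => (inner ℂ (lp.single 2 x (1 : ℂ)) (A (lp.single 2 y (1 : ℂ))) : ℂ) with ha
  have key0 : ∀ x y : Γ, (‖a x y‖₊ : ℝ≥0∞) ≤
      (if dist (x : Fin n → ℝ) (y : Fin n → ℝ) ≤ m then 0 else
        ENNReal.ofReal (C * dist (x : Fin n → ℝ) (y : Fin n → ℝ) ^ (-((n : ℝ) + ε)))) := by
    intro x y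
    have hsub : a x y =
        (inner ℂ (lp.single 2 x (1 : ℂ)) (H (lp.single 2 y (1 : ℂ))) : ℂ)
          - (inner ℂ (lp.single 2 x (1 : ℂ)) (G (lp.single 2 y (1 : ℂ))) : ℂ) := by
      rw [ha]
      simp only [hA, ContinuousLinearMap.sub_apply, inner_sub_right]
    split_ifs with hdm
    · have h0 : (inner ℂ (lp.single 2 x (1 : ℂ)) (G (lp.single 2 y (1 : ℂ))) : ℂ)
          = (inner ℂ (lp.single 2 x (1 : ℂ)) (H (lp.single 2 y (1 : ℂ))) : ℂ) := by
        rw [hG x y, if_pos hdm]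
      rw [hsub, h0, sub_self]
      simp
    · have hne : x ≠ y := by
        rintro rfl
        exact hdm (by simpa using hm.le)
      have h0 : (inner ℂ (lp.single 2 x (1 : ℂ)) (G (lp.single 2 y (1 : ℂ))) : ℂ) = 0 := by
        rw [hG x y, if_neg hdm]
      rw [hsub, h0, sub_zero, ← enorm_eq_nnnorm, ← ofReal_norm]
      exact ENNReal.ofReal_le_ofReal (hH x y hne)
  have hrow : ∀ x : Γ, (∑' y : Γ, (‖a x y‖₊ : ℝ≥0∞)) ≤ ENNReal.ofReal S := by
    intro x
    refine (ENNReal.tsum_le_tsum (key0 x)).trans ?_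
    have h := aux_rowsum n hl hε hC hm Γ hsep x
    rwa [← hC₂, ← hSdef] at h
  have hcol : ∀ y : Γ, (∑' x : Γ, (‖a x y‖₊ : ℝ≥0∞)) ≤ ENNReal.ofReal S := by
    intro y
    have h := aux_rowsum n hl hε hC hm Γ hsep y
    rw [← hC₂, ← hSdef] at h
    refine le_trans (ENNReal.tsum_le_tsum (fun x => ?_)) h
    refine (key0 x y).trans_eq ?_
    rw [dist_comm (x : Fin n → ℝ) (y : Fin n → ℝ)]
  -- expansion of coordinates of A g
  have hAg : ∀ (g : lp (fun _ : Γ => ℂ) 2) (x : Γ),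
      HasSum (fun y : Γ => g y * a x y) (A g x) := by
    intro g x
    have h1 : HasSum (fun y : Γ => lp.single 2 y (g y)) g :=
      lp.hasSum_single ENNReal.ofNat_ne_top g
    have h3 := (h1.mapL A).mapL (innerSL ℂ (lp.single 2 x (1 : ℂ)))
    have he : ∀ y : Γ,
        innerSL ℂ (lp.single 2 x (1 : ℂ)) (A (lp.single 2 y (g y))) = g y * a x y := by
      intro y
      have hsingle : lp.single 2 y (g y) = (g y : ℂ) • (lp.single (E := fun _ : Γ => ℂ) 2 y (1 : ℂ)) := by
        apply lp.ext
        funext j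
        simp only [lp.coeFn_smul, Pi.smul_apply, lp.single_apply, smul_eq_mul]
        by_cases hj : j = y
        · subst hj; simp
        · simp [hj]
      rw [hsingle, map_smul, innerSL_apply_apply, inner_smul_right, ha]
    have he2 : innerSL ℂ (lp.single 2 x (1 : ℂ)) (A g) = A g x := by
      rw [innerSL_apply_apply, lp.inner_single_left]
      simp [RCLike.inner_apply]
    rw [he2] at h3
    exact h3.congr_fun fun y => (he y).symm
  -- square-sum bound
  have hsq : ∀ h : lp (fun _ : Γ => ℂ) 2, ‖h‖ ≤ 1 →
      (∑' x : Γ, ((‖h x‖₊ : ℝ≥0∞)) ^ 2) ≤ 1 := by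
    intro h hh
    have h2 : (0 : ℝ) < (2 : ℝ≥0∞).toReal := by norm_num
    have hsum2 : Summable (fun x : Γ => ‖h x‖ ^ ((2 : ℝ≥0∞)).toReal) :=
      (lp.memℓp h).summable h2
    have hnorm : ‖h‖ ^ ((2 : ℝ≥0∞)).toReal = ∑' x : Γ, ‖h x‖ ^ ((2 : ℝ≥0∞)).toReal :=
      lp.norm_rpow_eq_tsum h2 h
    have e1 : ∀ x : Γ, ((‖h x‖₊ : ℝ≥0∞)) ^ 2
        = ENNReal.ofReal (‖h x‖ ^ ((2 : ℝ≥0∞)).toReal) := by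
      intro x
      rw [ENNReal.toReal_ofNat, Real.rpow_two, ENNReal.ofReal_pow (norm_nonneg _),
        ofReal_norm, enorm_eq_nnnorm]
    rw [tsum_congr e1, ← ENNReal.ofReal_tsum_of_nonneg
      (fun x => Real.rpow_nonneg (norm_nonneg _) _) hsum2, ← hnorm]
    refine ENNReal.ofReal_le_one.2 ?_
    calc ‖h‖ ^ ((2 : ℝ≥0∞)).toReal ≤ 1 ^ ((2 : ℝ≥0∞)).toReal :=
          Real.rpow_le_rpow (norm_nonneg _) hh (by norm_num)
      _ = 1 := Real.one_rpow _
  -- bilinear Schur estimate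
  have claim : ∀ f g : lp (fun _ : Γ => ℂ) 2, ‖f‖ ≤ 1 → ‖g‖ ≤ 1 →
      ‖(inner ℂ f (A g) : ℂ)‖ ≤ S := by
    intro f g hf hg
    have e1 : (‖(inner ℂ f (A g) : ℂ)‖₊ : ℝ≥0∞)
        ≤ ∑' x : Γ, (‖f x‖₊ : ℝ≥0∞) * ‖(A g) x‖₊ := by
      have hh : (inner ℂ f (A g) : ℂ) = ∑' x : Γ, (inner ℂ (f x) (A g x) : ℂ) :=
        lp.inner_eq_tsum f (A g)
      rw [hh]
      refine (aux_coe_nnnorm_tsum_le _).trans (ENNReal.tsum_le_tsum fun x => ?_)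
      rw [RCLike.inner_apply, nnnorm_mul, ENNReal.coe_mul, RCLike.nnnorm_conj, mul_comm]
    have e2 : ∀ x : Γ, ((‖(A g) x‖₊ : ℝ≥0∞))
        ≤ ∑' y : Γ, (‖g y‖₊ : ℝ≥0∞) * ‖a x y‖₊ := by
      intro x
      rw [← (hAg g x).tsum_eq]
      refine (aux_coe_nnnorm_tsum_le _).trans (ENNReal.tsum_le_tsum fun y => ?_)
      rw [nnnorm_mul, ENNReal.coe_mul]
    have e3 : (‖(inner ℂ f (A g) : ℂ)‖₊ : ℝ≥0∞)
        ≤ ∑' x : Γ, ∑' y : Γ, ((‖f x‖₊ : ℝ≥0∞) * ‖g y‖₊) * ‖a x y‖₊ := by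
      refine e1.trans (ENNReal.tsum_le_tsum fun x => ?_)
      calc (‖f x‖₊ : ℝ≥0∞) * ‖(A g) x‖₊
          ≤ (‖f x‖₊ : ℝ≥0∞) * ∑' y : Γ, (‖g y‖₊ : ℝ≥0∞) * ‖a x y‖₊ :=
            mul_le_mul_right (e2 x) _
        _ = ∑' y : Γ, ((‖f x‖₊ : ℝ≥0∞) * ‖g y‖₊) * ‖a x y‖₊ := by
            rw [← ENNReal.tsum_mul_left]
            exact tsum_congr fun y => (mul_assoc _ _ _).symm
    have sum1 : (∑' x : Γ, ∑' y : Γ, ((‖f x‖₊ : ℝ≥0∞)) ^ 2 * ‖a x y‖₊)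
        ≤ ENNReal.ofReal S := by
      calc (∑' x : Γ, ∑' y : Γ, ((‖f x‖₊ : ℝ≥0∞)) ^ 2 * ‖a x y‖₊)
          = ∑' x : Γ, ((‖f x‖₊ : ℝ≥0∞)) ^ 2 * ∑' y : Γ, (‖a x y‖₊ : ℝ≥0∞) := by
            exact tsum_congr fun x => ENNReal.tsum_mul_left
        _ ≤ ∑' x : Γ, ((‖f x‖₊ : ℝ≥0∞)) ^ 2 * ENNReal.ofReal S :=
            ENNReal.tsum_le_tsum fun x => mul_le_mul_right (hrow x) _
        _ = (∑' x : Γ, ((‖f x‖₊ : ℝ≥0∞)) ^ 2) * ENNReal.ofReal S := ENNReal.tsum_mul_right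
        _ ≤ 1 * ENNReal.ofReal S := mul_le_mul_left (hsq f hf) _
        _ = ENNReal.ofReal S := one_mul _
    have sum2 : (∑' x : Γ, ∑' y : Γ, ((‖g y‖₊ : ℝ≥0∞)) ^ 2 * ‖a x y‖₊)
        ≤ ENNReal.ofReal S := by
      calc (∑' x : Γ, ∑' y : Γ, ((‖g y‖₊ : ℝ≥0∞)) ^ 2 * ‖a x y‖₊)
          = ∑' y : Γ, ∑' x : Γ, ((‖g y‖₊ : ℝ≥0∞)) ^ 2 * ‖a x y‖₊ := ENNReal.tsum_comm
        _ = ∑' y : Γ, ((‖g y‖₊ : ℝ≥0∞)) ^ 2 * ∑' x : Γ, (‖a x y‖₊ : ℝ≥0∞) :=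
            tsum_congr fun y => ENNReal.tsum_mul_left
        _ ≤ ∑' y : Γ, ((‖g y‖₊ : ℝ≥0∞)) ^ 2 * ENNReal.ofReal S :=
            ENNReal.tsum_le_tsum fun y => mul_le_mul_right (hcol y) _
        _ = (∑' y : Γ, ((‖g y‖₊ : ℝ≥0∞)) ^ 2) * ENNReal.ofReal S := ENNReal.tsum_mul_right
        _ ≤ 1 * ENNReal.ofReal S := mul_le_mul_left (hsq g hg) _
        _ = ENNReal.ofReal S := one_mul _
    have e4 : 2 * (‖(inner ℂ f (A g) : ℂ)‖₊ : ℝ≥0∞) ≤ 2 * ENNReal.ofReal S := by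
      calc 2 * (‖(inner ℂ f (A g) : ℂ)‖₊ : ℝ≥0∞)
          ≤ 2 * ∑' x : Γ, ∑' y : Γ, ((‖f x‖₊ : ℝ≥0∞) * ‖g y‖₊) * ‖a x y‖₊ :=
            mul_le_mul_right e3 2
        _ = ∑' x : Γ, ∑' y : Γ, (2 * ((‖f x‖₊ : ℝ≥0∞) * ‖g y‖₊)) * ‖a x y‖₊ := by
            rw [← ENNReal.tsum_mul_left]
            refine tsum_congr fun x => ?_
            rw [← ENNReal.tsum_mul_left]
            exact tsum_congr fun y => (mul_assoc _ _ _).symm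
        _ ≤ ∑' x : Γ, ∑' y : Γ,
              (((‖f x‖₊ : ℝ≥0∞)) ^ 2 + ((‖g y‖₊ : ℝ≥0∞)) ^ 2) * ‖a x y‖₊ :=
            ENNReal.tsum_le_tsum fun x => ENNReal.tsum_le_tsum fun y =>
              mul_le_mul_left (aux_amgm _ _) _
        _ = (∑' x : Γ, ∑' y : Γ, ((‖f x‖₊ : ℝ≥0∞)) ^ 2 * ‖a x y‖₊)
              + ∑' x : Γ, ∑' y : Γ, ((‖g y‖₊ : ℝ≥0∞)) ^ 2 * ‖a x y‖₊ := by
            rw [← ENNReal.tsum_add]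
            refine tsum_congr fun x => ?_
            rw [← ENNReal.tsum_add]
            exact tsum_congr fun y => add_mul _ _ _
        _ ≤ ENNReal.ofReal S + ENNReal.ofReal S := add_le_add sum1 sum2
        _ = 2 * ENNReal.ofReal S := (two_mul _).symm
    have e5 : (‖(inner ℂ f (A g) : ℂ)‖₊ : ℝ≥0∞) ≤ ENNReal.ofReal S :=
      (ENNReal.mul_le_mul_iff_right (by norm_num) (by norm_num)).1 e4
    rw [← enorm_eq_nnnorm, ← ofReal_norm] at e5
    exact (ENNReal.ofReal_le_ofReal_iff hS0).1 e5
  -- from the bilinear estimate to the operator norm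
  have hfinal : ‖A‖ ≤ S := by
    refine ContinuousLinearMap.opNorm_le_bound A hS0 ?_
    intro g
    by_cases hg0 : g = 0
    · rw [hg0, map_zero, norm_zero, mul_zero]
    have hgn : 0 < ‖g‖ := norm_pos_iff.2 hg0
    have hcne : ((‖g‖ : ℂ)) ≠ 0 := Complex.ofReal_ne_zero.2 hgn.ne'
    set u : lp (fun _ : Γ => ℂ) 2 := ((‖g‖ : ℂ))⁻¹ • g with hu
    have hun : ‖u‖ = 1 := by
      rw [hu, norm_smul, norm_inv, Complex.norm_real, Real.norm_eq_abs,
        abs_of_nonneg (norm_nonneg g), inv_mul_cancel₀ hgn.ne']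
    have hAu : ‖A u‖ ≤ S := by
      by_cases hAu0 : A u = 0
      · simpa [hAu0] using hS0
      have hAun : 0 < ‖A u‖ := norm_pos_iff.2 hAu0
      set v : lp (fun _ : Γ => ℂ) 2 := ((‖A u‖ : ℂ))⁻¹ • (A u) with hv
      have hvn : ‖v‖ = 1 := by
        rw [hv, norm_smul, norm_inv, Complex.norm_real, Real.norm_eq_abs,
          abs_of_nonneg (norm_nonneg (A u)), inv_mul_cancel₀ hAun.ne']
      have hiv : (inner ℂ v (A u) : ℂ) = ((‖A u‖ : ℝ) : ℂ) := by
        have hAcne : ((‖A u‖ : ℂ)) ≠ 0 := Complex.ofReal_ne_zero.2 hAun.ne'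
        rw [hv, inner_smul_left, inner_self_eq_norm_sq_to_K, map_inv₀, Complex.conj_ofReal,
          pow_two]
        field_simp
        rfl
      have hle := claim v u hvn.le hun.le
      rw [hiv, Complex.norm_real, Real.norm_eq_abs, abs_of_nonneg hAun.le] at hle
      exact hle
    have hgu : A g = (‖g‖ : ℂ) • A u := by
      rw [hu, map_smul, smul_smul, mul_inv_cancel₀ hcne, one_smul]
    calc ‖A g‖ = ‖g‖ * ‖A u‖ := by
          rw [hgu, norm_smul, Complex.norm_real, Real.norm_eq_abs,
            abs_of_nonneg (norm_nonneg g)]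
      _ ≤ ‖g‖ * S := mul_le_mul_of_nonneg_left hAu hgn.le
      _ = S * ‖g‖ := mul_comm _ _
  exact hfinal
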